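/- (Reciprocal projection lemma) Let P, Ψ ∈ S^n with P positive definite, and let S ∈ ℝ^{n×n}. There exists W ∈ ℝ^{n×n} such that the symmetric block matrix [[Ψ + P − (W + Wᵀ), Sᵀ + Wᵀ], [S + W, −P]] is negative definite if and only if Ψ + S + Sᵀ is negative definite. -/

import Mathlib

open Matrix

section aux

variable {m l : Type*} [Fintype m] [DecidableEq m] [Fintype l] [DecidableEq l]

open scoped Matrix

private theorem posDef_fromBlocks₂₂ (A : Matrix m m ℝ) (B : Matrix m l ℝ)
    {D : Matrix l l ℝ} (hD : D.PosDef) [Invertible D] :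
    (fromBlocks A B Bᴴ D).PosDef ↔ (A - B * D⁻¹ * Bᴴ).PosDef := by
  constructor
  · intro h
    refine PosDef.of_dotProduct_mulVec_pos ((Matrix.IsHermitian.fromBlocks₂₂ A B hD.1).mp h.1) fun x hx => ?_
    have hz : (Sum.elim x (-((D⁻¹ * Bᴴ) *ᵥ x)) : m ⊕ l → ℝ) ≠ 0 := by
      intro h0
      exact hx (funext fun i => congrFun h0 (Sum.inl i))
    have := h.dotProduct_mulVec_pos hz
    rwa [dotProduct_mulVec, Matrix.schur_complement_eq₂₂ A B _ _ hD.1, add_neg_cancel,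
      star_zero, Matrix.zero_vecMul, zero_dotProduct, zero_add, ← dotProduct_mulVec] at this
  · intro h
    refine PosDef.of_dotProduct_mulVec_pos ((Matrix.IsHermitian.fromBlocks₂₂ A B hD.1).mpr h.1) fun z hz => ?_
    rw [dotProduct_mulVec, ← Sum.elim_comp_inl_inr z,
      Matrix.schur_complement_eq₂₂ A B _ _ hD.1]
    by_cases hx : z ∘ Sum.inl = 0
    · have hy : z ∘ Sum.inr ≠ 0 := by
        intro hy
        apply hz
        rw [← Sum.elim_comp_inl_inr z, hx, hy]
        ext (i | i) <;> rfl
      rw [hx]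
      have h1 : (D⁻¹ * Bᴴ) *ᵥ (0 : m → ℝ) + z ∘ Sum.inr = z ∘ Sum.inr := by
        simp [Matrix.mulVec_zero]
      rw [h1]
      have := hD.dotProduct_mulVec_pos hy
      rw [dotProduct_mulVec] at this
      have h2 : (star (0 : m → ℝ)) ᵥ* (A - B * D⁻¹ * Bᴴ) ⬝ᵥ (0 : m → ℝ) = 0 := by
        simp
      linarith [this, le_of_eq h2.symm]
    · have t2 : 0 < (star (z ∘ Sum.inl)) ᵥ* (A - B * D⁻¹ * Bᴴ) ⬝ᵥ (z ∘ Sum.inl) := by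
        have := h.dotProduct_mulVec_pos hx
        rwa [dotProduct_mulVec] at this
      have t1 : 0 ≤ (star ((D⁻¹ * Bᴴ) *ᵥ (z ∘ Sum.inl) + z ∘ Sum.inr)) ᵥ* D ⬝ᵥ
          ((D⁻¹ * Bᴴ) *ᵥ (z ∘ Sum.inl) + z ∘ Sum.inr) := by
        have := hD.posSemidef.dotProduct_mulVec_nonneg ((D⁻¹ * Bᴴ) *ᵥ (z ∘ Sum.inl) + z ∘ Sum.inr)
        rwa [dotProduct_mulVec] at this
      linarith

end aux

/-- Reciprocal projection lemma: with `P` positive definite and `Ψ` symmetric, there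
exists `W` such that `[[Ψ + P − (W + Wᵀ), Sᵀ + Wᵀ], [S + W, −P]] < 0` iff
`Ψ + S + Sᵀ < 0`. -/
theorem reciprocal_projection_lemma (n : ℕ)
    (P Ψ S : Matrix (Fin n) (Fin n) ℝ)
    (hP : P.PosDef) (hΨ : Ψ.IsSymm) :
    (∃ W : Matrix (Fin n) (Fin n) ℝ,
        (-(Matrix.fromBlocks (Ψ + P - (W + Wᵀ)) (Sᵀ + Wᵀ) (S + W) (-P))).PosDef) ↔
      (-(Ψ + S + Sᵀ)).PosDef := by
  haveI : Invertible P := hP.isUnit.invertible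
  have hPt : Pᵀ = P := hP.1
  have hH : ∀ M : Matrix (Fin n) (Fin n) ℝ, Mᴴ = Mᵀ := fun M => by
    ext i j; simp [conjTranspose_apply]
  have h1 : P⁻¹ * P = 1 := inv_mul_of_invertible P
  have h2 : P * P⁻¹ = 1 := mul_inv_of_invertible P
  constructor
  · rintro ⟨W, hW⟩
    have hblk : (-(Matrix.fromBlocks (Ψ + P - (W + Wᵀ)) (Sᵀ + Wᵀ) (S + W) (-P)))
        = Matrix.fromBlocks (-(Ψ + P - (W + Wᵀ))) (-(Sᵀ + Wᵀ)) (-(Sᵀ + Wᵀ))ᴴ P := by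
      rw [Matrix.fromBlocks_neg]
      have e3 : -(S + W) = (-(Sᵀ + Wᵀ))ᴴ := by simp [hH]
      have e4 : -(-P) = P := neg_neg P
      rw [e3, e4]
    rw [hblk, posDef_fromBlocks₂₂ _ _ hP] at hW
    have hpsd : ((S + W - P)ᴴ * P⁻¹ * (S + W - P)).PosSemidef :=
      hP.inv.posSemidef.conjTranspose_mul_mul_same _
    have key : -(Ψ + S + Sᵀ) =
        (-(Ψ + P - (W + Wᵀ)) - -(Sᵀ + Wᵀ) * P⁻¹ * (-(Sᵀ + Wᵀ))ᴴ)
          + (S + W - P)ᴴ * P⁻¹ * (S + W - P) := by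
      have hct : (-(Sᵀ + Wᵀ))ᴴ = -(S + W) := by simp [hH]
      have hct2 : (S + W - P)ᴴ = Sᵀ + Wᵀ - P := by simp [hH, hPt]
      rw [hct, hct2]
      simp only [neg_mul, mul_neg, neg_neg, sub_mul, mul_sub, add_mul, mul_add,
        mul_assoc, h1, h2, one_mul, mul_one]
      abel
    rw [key]
    exact hW.add_posSemidef hpsd
  · intro h
    refine ⟨P - S, ?_⟩
    have hblk : (-(Matrix.fromBlocks (Ψ + P - ((P - S) + (P - S)ᵀ)) (Sᵀ + (P - S)ᵀ)
        (S + (P - S)) (-P)))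
        = Matrix.fromBlocks (P - Ψ - S - Sᵀ) (-P) (-P)ᴴ P := by
      rw [Matrix.fromBlocks_neg]
      have e1 : -(Ψ + P - (P - S + (P - S)ᵀ)) = P - Ψ - S - Sᵀ := by
        rw [transpose_sub, hPt]; abel
      have e2 : -(Sᵀ + (P - S)ᵀ) = -P := by
        rw [transpose_sub, hPt]; abel
      have e3 : -(S + (P - S)) = (-P)ᴴ := by
        rw [hH, transpose_neg, hPt]; abel
      have e4 : -(-P) = P := neg_neg P
      rw [e1, e2, e3, e4]
    rw [hblk, posDef_fromBlocks₂₂ _ _ hP]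
    have hct : (-P)ᴴ = -P := by rw [hH, transpose_neg, hPt]
    rw [hct]
    have : P - Ψ - S - Sᵀ - -P * P⁻¹ * -P = -(Ψ + S + Sᵀ) := by
      simp only [neg_mul, mul_neg, neg_neg, mul_assoc, h1, mul_one]
      abel
    rw [this]
    exact h
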